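/- Let H be a complex Hilbert space and let Q_1, …, Q_{k−1}, R_1, R_2, Q_{k+1}, …, Q_m be orthogonal projections on H satisfying Q_1 ≤ … ≤ Q_{k−1} ≤ R_i ≤ Q_{k+1} ≤ … ≤ Q_m for i = 1, 2. If this family of projections is irreducible, then dim H ≤ 2; moreover, if dim H = 2 then Q_1 = … = Q_{k−1} = 0, Q_{k+1} = … = Q_m = I, and there exist τ ∈ (0,1) and an orthonormal basis of H in which R_1 has matrix [[1,0],[0,0]] and R_2 has matrix [[τ, √(τ(1−τ))],[√(τ(1−τ)), 1−τ]]. -/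

import Mathlib

section Aux

lemma mem_elemental_commute {A : Type*} [CStarAlgebra A] {a b y : A}
    (hy : y ∈ StarAlgebra.elemental ℂ a)
    (h : Commute a b) (hstar : Commute (star a) b) : Commute y b := by
  induction hy using StarAlgebra.elemental.induction_on with
  | self => exact h
  | star_self => exact hstar
  | algebraMap r => exact Algebra.commute_algebraMap_left r b
  | add u hu v hv Pu Pv => exact Pu.add_left Pv
  | mul u hu v hv Pu Pv => exact Pu.mul_left Pv
  | closure s hs hP v hv =>
      have hcl : IsClosed {u : A | u * b = b * u} :=
        isClosed_eq (continuous_mul_right b) (continuous_mul_left b)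
      exact closure_minimal (fun u hu => hP u hu) hcl hv

lemma commute_cfc' {A : Type*} [CStarAlgebra A] {a b : A} (ha : IsStarNormal a)
    (h : Commute a b) (hstar : Commute (star a) b) (f : ℂ → ℂ) : Commute (cfc f a) b := by
  by_cases hf : ContinuousOn f (spectrum ℂ a)
  · have hmem : cfc f a ∈ StarAlgebra.elemental ℂ a := by
      rw [cfc_apply f a ha hf, cfcHom_eq_of_isStarNormal]
      exact SetLike.coe_mem _
    exact mem_elemental_commute hmem h hstar
  · rw [cfc_apply_of_not_continuousOn a hf]
    exact Commute.zero_left b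

noncomputable def bump (c : ℂ) (d : ℝ) : ℂ → ℂ := fun z => ((max 0 (1 - d * dist z c) : ℝ) : ℂ)

lemma bump_continuous (c : ℂ) (d : ℝ) : Continuous (bump c d) := by
  unfold bump
  exact Complex.continuous_ofReal.comp <| continuous_const.max <|
    continuous_const.sub <| continuous_const.mul (continuous_id.dist continuous_const)

lemma bump_self (c : ℂ) (d : ℝ) : bump c d c = 1 := by simp [bump]

lemma bump_eq_zero (c : ℂ) (d : ℝ) {z : ℂ} (h : 1 ≤ d * dist z c) : bump c d z = 0 := by
  simp only [bump, Complex.ofReal_eq_zero]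
  exact max_eq_left (by linarith)

lemma bump_mul_bump_eq_zero {a b : ℂ} (hab : a ≠ b) (z : ℂ) :
    bump a (3 / dist a b) z * bump b (3 / dist a b) z = 0 := by
  set δ := dist a b with hδ
  have hδ0 : 0 < δ := dist_pos.mpr hab
  rcases le_or_gt 1 ((3/δ) * dist z a) with h | h
  · rw [bump_eq_zero a _ h, zero_mul]
  · rw [bump_eq_zero b _ ?_, mul_zero]
    have h1 : dist z a < δ / 3 := by
      rw [div_mul_eq_mul_div, div_lt_one hδ0] at h
      linarith
    have h2 : δ ≤ dist a z + dist z b := dist_triangle a z b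
    have h3 : δ / 3 * 2 ≤ dist z b := by
      rw [dist_comm a z] at h2; linarith
    rw [div_mul_eq_mul_div, le_div_iff₀ hδ0]
    nlinarith

lemma schur_scalar {H : Type*} [NormedAddCommGroup H] [InnerProductSpace ℂ H]
    [CompleteSpace H] [Nontrivial H] (C : H →L[ℂ] H) (hC : IsSelfAdjoint C)
    (hirr : ∀ K : Submodule ℂ H, IsClosed (K : Set H) →
      (∀ x ∈ K, ∀ T : H →L[ℂ] H, Commute C T → T x ∈ K) → K = ⊥ ∨ K = ⊤) :
    ∃ lam : ℂ, C = lam • (1 : H →L[ℂ] H) := by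
  have hnormal : IsStarNormal C := hC.isStarNormal
  obtain ⟨lam, hlam⟩ := spectrum.nonempty C
  refine ⟨lam, ?_⟩
  have hspec : spectrum ℂ C ⊆ {lam} := by
    by_contra hne
    obtain ⟨μ, hμ, hμne⟩ : ∃ μ ∈ spectrum ℂ C, μ ≠ lam := by
      rw [Set.subset_singleton_iff] at hne
      push_neg at hne
      exact hne
    set d := 3 / dist lam μ with hd
    set f := bump lam d with hf
    set g := bump μ d with hg
    have hlamμ : lam ≠ μ := fun h => hμne h.symm
    have hfg : ∀ z, f z * g z = 0 := fun z => bump_mul_bump_eq_zero hlamμ z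
    set F := cfc f C with hF
    set G := cfc g C with hG
    have hcf : ContinuousOn f (spectrum ℂ C) := (bump_continuous _ _).continuousOn
    have hcg : ContinuousOn g (spectrum ℂ C) := (bump_continuous _ _).continuousOn
    have hFG : F * G = 0 := by
      rw [hF, hG, ← cfc_mul f g C hcf hcg]
      calc cfc (fun z => f z * g z) C = cfc (fun _ : ℂ => (0:ℂ)) C :=
            cfc_congr (fun z _ => hfg z)
        _ = 0 := cfc_const_zero ℂ C
    have hFne : F ≠ 0 := by
      intro h0
      have h1 : cfc f C = cfc (fun _ : ℂ => (0:ℂ)) C := by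
        rw [← hF, h0, cfc_const_zero ℂ C]
      have h2 := (eqOn_of_cfc_eq_cfc h1 hcf continuousOn_const hnormal) hlam
      rw [hf, bump_self] at h2
      exact one_ne_zero h2
    have hGne : G ≠ 0 := by
      intro h0
      have h1 : cfc g C = cfc (fun _ : ℂ => (0:ℂ)) C := by
        rw [← hG, h0, cfc_const_zero ℂ C]
      have h2 := (eqOn_of_cfc_eq_cfc h1 hcg continuousOn_const hnormal) hμ
      rw [hg, bump_self] at h2
      exact one_ne_zero h2
    set K : Submodule ℂ H := (LinearMap.range (G : H →ₗ[ℂ] H)).topologicalClosure with hK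
    have hKclosed : IsClosed (K : Set H) := Submodule.isClosed_topologicalClosure _
    have hKinv : ∀ x ∈ K, ∀ T : H →L[ℂ] H, Commute C T → T x ∈ K := by
      intro x hx T hT
      have hstarT : Commute (star C) T := by rw [hC.star_eq]; exact hT
      have hGT : Commute G T := commute_cfc' hnormal hT hstarT g
      have hmaps : Set.MapsTo T (LinearMap.range (G : H →ₗ[ℂ] H) : Set H)
          (LinearMap.range (G : H →ₗ[ℂ] H) : Set H) := by
        rintro y ⟨z, rfl⟩
        refine ⟨T z, ?_⟩
        have := congrArg (fun (A : H →L[ℂ] H) => A z) hGT.eq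
        simpa [ContinuousLinearMap.mul_apply] using this
      have hx' : x ∈ closure (LinearMap.range (G : H →ₗ[ℂ] H) : Set H) := hx
      exact map_mem_closure T.continuous hx' hmaps
    rcases hirr K hKclosed hKinv with h | h
    · apply hGne
      ext z
      have : G z ∈ K := Submodule.le_topologicalClosure _ ⟨z, rfl⟩
      rw [h] at this
      simpa using this
    · apply hFne
      ext z
      have hz : z ∈ K := by rw [h]; trivial
      have hsub : (K : Set H) ⊆ (LinearMap.ker (F : H →ₗ[ℂ] H) : Set H) := by
        rw [hK]
        apply Submodule.topologicalClosure_minimal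
        · rintro y ⟨w, rfl⟩
          have := congrArg (fun (A : H →L[ℂ] H) => A w) hFG
          simpa [ContinuousLinearMap.mul_apply] using this
        · exact ContinuousLinearMap.isClosed_ker F
      have := hsub hz
      simpa using this
  have h1 : C = cfc (fun z : ℂ => z) C := (cfc_id' ℂ C).symm
  have h2 : cfc (fun z : ℂ => z) C = cfc (fun _ : ℂ => lam) C :=
    cfc_congr (fun z hz => hspec hz)
  rw [h1, h2, cfc_const lam C, Algebra.algebraMap_eq_smul_one]

lemma proj_expand {A : Type*} [Ring A] {P Q : A} (hP : P*P = P) (hQ : Q*Q = Q) :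
    (P - Q)*(P - Q) = P + Q - P*Q - Q*P := by
  rw [sub_mul, mul_sub, mul_sub, hP, hQ]; abel

lemma proj_comm {A : Type*} [Ring A] {P Q : A} (hP : P*P = P) (hQ : Q*Q = Q) :
    Commute ((P - Q)*(P - Q)) P := by
  have h1 : ((P - Q)*(P - Q)) * P = P + Q*P - P*(Q*P) - Q*P := by
    rw [proj_expand hP hQ]
    simp only [sub_mul, add_mul, mul_assoc, hP]
  have h2 : P * ((P - Q)*(P - Q)) = P + P*Q - P*Q - P*(Q*P) := by
    rw [proj_expand hP hQ]
    simp only [mul_sub, mul_add, ← mul_assoc, hP]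
  unfold Commute SemiconjBy
  rw [h1, h2]; abel

lemma proj_sandwich {A : Type*} [Ring A] {P Q : A} (hP : P*P = P) (hQ : Q*Q = Q) :
    P * ((P - Q)*(P - Q)) * P = P - P * (Q * P) := by
  have h2 : P * ((P - Q)*(P - Q)) = P + P*Q - P*Q - P*(Q*P) := by
    rw [proj_expand hP hQ]
    simp only [mul_sub, mul_add, ← mul_assoc, hP]
  rw [h2]
  simp only [sub_mul, add_mul, mul_assoc, hP]
  abel

lemma sq_symm' {A : Type*} [Ring A] (P Q : A) : (P - Q)*(P - Q) = (Q - P)*(Q - P) := by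
  noncomm_ring

end Aux

set_option maxHeartbeats 2000000 in
/-- An irreducible Hilbert representation
`Q 1 ≤ … ≤ Q (k-1) ≤ R i ≤ Q (k+1) ≤ … ≤ Q m` (`i = 0, 1`) of a unitarily
one-parameter poset has dimension at most 2; in dimension 2 the `Q j` below `k`
vanish, those above `k` are the identity, and `R 0`, `R 1` have the standard
one-parameter form in a suitable orthonormal basis. -/
theorem stmt_1 {H : Type*} [NormedAddCommGroup H] [InnerProductSpace ℂ H]
    [CompleteSpace H]
    (m k : ℕ) (hk1 : 1 ≤ k) (hkm : k ≤ m)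
    (Q : ℕ → H →L[ℂ] H) (R : Fin 2 → H →L[ℂ] H)
    (hQproj : ∀ j, 1 ≤ j → j ≤ m → j ≠ k → IsSelfAdjoint (Q j) ∧ Q j ∘L Q j = Q j)
    (hRproj : ∀ i, IsSelfAdjoint (R i) ∧ R i ∘L R i = R i)
    (hQQ : ∀ i j, 1 ≤ i → i ≤ j → j ≤ m → i ≠ k → j ≠ k → Q i ∘L Q j = Q i)
    (hQR : ∀ j, 1 ≤ j → j < k → ∀ i, Q j ∘L R i = Q j)
    (hRQ : ∀ j, k < j → j ≤ m → ∀ i, R i ∘L Q j = R i)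
    (hirr : ∀ K : Submodule ℂ H, IsClosed (K : Set H) →
      (∀ j, 1 ≤ j → j ≤ m → j ≠ k → ∀ x ∈ K, Q j x ∈ K) →
      (∀ i, ∀ x ∈ K, R i x ∈ K) → K = ⊥ ∨ K = ⊤) :
    (FiniteDimensional ℂ H ∧ Module.finrank ℂ H ≤ 2) ∧
    (Module.finrank ℂ H = 2 →
      (∀ j, 1 ≤ j → j < k → Q j = 0) ∧
      (∀ j, k < j → j ≤ m → Q j = 1) ∧
      ∃ τ : ℝ, 0 < τ ∧ τ < 1 ∧
        ∃ b : OrthonormalBasis (Fin 2) ℂ H,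
          R 0 (b 0) = b 0 ∧ R 0 (b 1) = 0 ∧
          R 1 (b 0) = (τ : ℂ) • b 0 + ((Real.sqrt (τ * (1 - τ)) : ℝ) : ℂ) • b 1 ∧
          R 1 (b 1) = ((Real.sqrt (τ * (1 - τ)) : ℝ) : ℂ) • b 0 + ((1 - τ : ℝ) : ℂ) • b 1) := by
  classical
  -- trivial case
  rcases subsingleton_or_nontrivial H with hss | hnt
  · haveI : Subsingleton (Submodule ℂ H) := inferInstance
    have hfd : FiniteDimensional ℂ H := ⟨⟨∅, Subsingleton.elim _ _⟩⟩
    have hr0 : Module.finrank ℂ H = 0 := Module.finrank_zero_of_subsingleton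
    exact ⟨⟨hfd, by omega⟩, fun h => by omega⟩
  -- multiplicative forms of the hypotheses
  have hQsa : ∀ j, 1 ≤ j → j ≤ m → j ≠ k → IsSelfAdjoint (Q j) :=
    fun j h1 h2 h3 => (hQproj j h1 h2 h3).1
  have hQi : ∀ j, 1 ≤ j → j ≤ m → j ≠ k → Q j * Q j = Q j :=
    fun j h1 h2 h3 => (hQproj j h1 h2 h3).2
  have hRsa : ∀ i, IsSelfAdjoint (R i) := fun i => (hRproj i).1
  have hRi : ∀ i, R i * R i = R i := fun i => (hRproj i).2
  have hQR' : ∀ j, 1 ≤ j → j < k → ∀ i, Q j * R i = Q j := hQR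
  have hRQ' : ∀ j, k < j → j ≤ m → ∀ i, R i * Q j = R i := hRQ
  have hQQ' : ∀ i j, 1 ≤ i → i ≤ j → j ≤ m → i ≠ k → j ≠ k → Q i * Q j = Q i := hQQ
  have hRQrev : ∀ j, 1 ≤ j → j < k → ∀ i, R i * Q j = Q j := by
    intro j h1 h2 i
    have := congrArg star (hQR' j h1 h2 i)
    rwa [star_mul, (hRsa i).star_eq,
      (hQsa j h1 (le_trans (le_of_lt h2) hkm) (ne_of_lt h2)).star_eq] at this
  have hQRrev : ∀ j, k < j → j ≤ m → ∀ i, Q j * R i = R i := by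
    intro j h1 h2 i
    have := congrArg star (hRQ' j h1 h2 i)
    rwa [star_mul, (hQsa j (le_trans hk1 (le_of_lt h1)) h2 (ne_of_gt h1)).star_eq,
      (hRsa i).star_eq] at this
  have hQQrev : ∀ i j, 1 ≤ i → i ≤ j → j ≤ m → i ≠ k → j ≠ k → Q j * Q i = Q i := by
    intro i j h1 h2 h3 h4 h5
    have := congrArg star (hQQ' i j h1 h2 h3 h4 h5)
    rwa [star_mul, (hQsa i h1 (le_trans h2 h3) h4).star_eq, (hQsa j (le_trans h1 h2) h3 h5).star_eq]
      at this
  have happ : ∀ (A B : H →L[ℂ] H) (x : H), (A * B) x = A (B x) := fun _ _ _ => rfl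
  -- "either 0 or 1" helper via fixed subspaces
  have hPfull : ∀ P : H →L[ℂ] H, P * P = P →
      (∀ j, 1 ≤ j → j ≤ m → j ≠ k → ∀ y, P y = y → P (Q j y) = Q j y) →
      (∀ i, ∀ y, P y = y → P (R i y) = R i y) →
      P = 0 ∨ P = 1 := by
    intro P hP hQinv hRinv
    set K : Submodule ℂ H := LinearMap.ker ((P - 1 : H →L[ℂ] H) : H →ₗ[ℂ] H) with hKdef
    have hmem : ∀ y, y ∈ K ↔ P y = y := by
      intro y
      rw [hKdef, LinearMap.mem_ker]
      simp [sub_eq_zero]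
    have hcl : IsClosed (K : Set H) := ContinuousLinearMap.isClosed_ker _
    rcases hirr K hcl
        (fun j h1 h2 h3 y hy => (hmem _).2 (hQinv j h1 h2 h3 y ((hmem _).1 hy)))
        (fun i y hy => (hmem _).2 (hRinv i y ((hmem _).1 hy))) with h | h
    · left
      ext y
      have hPy : P (P y) = P y := by
        have := congrArg (fun A : H →L[ℂ] H => A y) hP
        simpa [happ] using this
      have : P y ∈ K := (hmem _).2 hPy
      rw [h] at this
      simpa using this
    · right
      ext y
      have : y ∈ K := by rw [h]; trivial
      simpa using (hmem _).1 this
  -- every Q is 0 or 1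
  have hQ01 : ∀ j, 1 ≤ j → j ≤ m → j ≠ k → Q j = 0 ∨ Q j = 1 := by
    intro j h1 h2 h3
    apply hPfull (Q j) (hQi j h1 h2 h3)
    · intro i h1' h2' h3' y hy
      rcases le_or_gt i j with hij | hij
      · have := hQQrev i j h1' hij h2 h3' h3
        have h' := congrArg (fun A : H →L[ℂ] H => A y) this
        simpa [happ] using h'
      · have := hQQrev j i h1 (le_of_lt hij) h2' h3 h3'
        have h' : Q i (Q j y) = Q j y := by
          have := congrArg (fun A : H →L[ℂ] H => A y) this
          simpa [happ] using this
        rw [hy] at h'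
        rw [h', hy]
      -- done Q invariance
    · intro i y hy
      rcases lt_or_gt_of_ne h3 with hjk | hjk
      · have h' : R i y = y := by
          have := congrArg (fun A : H →L[ℂ] H => A y) (hRQrev j h1 hjk i)
          simpa [happ, hy] using this
        rw [h', hy]
      · have := congrArg (fun A : H →L[ℂ] H => A y) (hQRrev j hjk h2 i)
        simpa [happ] using this
  -- rank-one conclusion helper
  have hrank1 : ∀ x : H, x ≠ 0 →
      (∀ i, R i x ∈ Submodule.span ℂ ({x} : Set H)) →
      FiniteDimensional ℂ H ∧ Module.finrank ℂ H = 1 := by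
    intro x hx hR
    set K := Submodule.span ℂ ({x} : Set H) with hKdef
    haveI : FiniteDimensional ℂ K := FiniteDimensional.span_of_finite ℂ (Set.finite_singleton x)
    have hcl : IsClosed (K : Set H) := Submodule.closed_of_finiteDimensional K
    have hQinv : ∀ j, 1 ≤ j → j ≤ m → j ≠ k → ∀ y ∈ K, Q j y ∈ K := by
      intro j h1 h2 h3 y hy
      rcases hQ01 j h1 h2 h3 with h | h
      · rw [h]; simpa using K.zero_mem
      · rw [h]; simpa using hy
    have hRinv : ∀ i, ∀ y ∈ K, R i y ∈ K := by
      intro i y hy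
      rcases Submodule.mem_span_singleton.mp hy with ⟨c, rfl⟩
      rw [map_smul]
      exact K.smul_mem c (hR i)
    rcases hirr K hcl hQinv hRinv with h | h
    · exfalso
      apply hx
      have hxK : x ∈ K := Submodule.mem_span_singleton_self x
      rw [h] at hxK
      simpa using hxK
    · constructor
      · exact ⟨h ▸ Submodule.fg_span (Set.finite_singleton x)⟩
      · rw [← finrank_top ℂ H, ← h, finrank_span_singleton hx]
  -- degenerate case: both R's are 0 or 1
  have hdeg : (∀ i, R i = 0 ∨ R i = 1) → FiniteDimensional ℂ H ∧ Module.finrank ℂ H = 1 := by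
    intro hR
    obtain ⟨x, hx⟩ := exists_ne (0 : H)
    apply hrank1 x hx
    intro i
    rcases hR i with h | h
    · rw [h]
      simpa using Submodule.zero_mem _
    · rw [h]
      simpa using Submodule.mem_span_singleton_self x
  by_cases hR0c : R 0 = 0 ∨ R 0 = 1
  · -- then R 1 is also 0 or 1, via its fixed subspace
    have hR1c : R 1 = 0 ∨ R 1 = 1 := by
      apply hPfull (R 1) (hRi 1)
      · intro j h1 h2 h3 y hy
        rcases hQ01 j h1 h2 h3 with h | h
        · rw [h]; simp
        · rw [h]; simpa using hy
      · intro i y hy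
        fin_cases i
        · show R 1 (R 0 y) = R 0 y
          rcases hR0c with h | h
          · rw [h]; simp
          · rw [h]; simpa using hy
        · show R 1 (R 1 y) = R 1 y
          have := congrArg (fun A : H →L[ℂ] H => A y) (hRi 1)
          simpa [happ, hy] using this
    have hfin : ∀ i, R i = 0 ∨ R i = 1 := by
      intro i; fin_cases i
      · exact hR0c
      · exact hR1c
    obtain ⟨hfd, hr1⟩ := hdeg hfin
    exact ⟨⟨hfd, by omega⟩, fun h => by omega⟩
  push_neg at hR0c
  obtain ⟨hR00, hR01⟩ := hR0c
  -- Schur: C = (R0 - R1)^2 commutes with the family, hence is scalar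
  set S : H →L[ℂ] H := R 0 - R 1 with hSdef
  set C : H →L[ℂ] H := S * S with hCdef
  have hSsa : IsSelfAdjoint S := (hRsa 0).sub (hRsa 1)
  have hCsa : IsSelfAdjoint C := by
    show star C = C
    rw [hCdef, star_mul, hSsa.star_eq]
  have hCR0 : Commute C (R 0) := proj_comm (hRi 0) (hRi 1)
  have hCR1 : Commute C (R 1) := by
    rw [hCdef, hSdef, sq_symm']
    exact proj_comm (hRi 1) (hRi 0)
  have hCR : ∀ i, Commute C (R i) := by
    intro i; fin_cases i
    · exact hCR0
    · exact hCR1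
  have hCQ : ∀ j, 1 ≤ j → j ≤ m → j ≠ k → Commute C (Q j) := by
    intro j h1 h2 h3
    have hSQ : Commute S (Q j) := by
      show S * Q j = Q j * S
      rcases lt_or_gt_of_ne h3 with hjk | hjk
      · rw [hSdef, sub_mul, mul_sub, hRQrev j h1 hjk 0, hRQrev j h1 hjk 1,
          hQR' j h1 hjk 0, hQR' j h1 hjk 1]
      · rw [hSdef, sub_mul, mul_sub, hRQ' j hjk h2 0, hRQ' j hjk h2 1,
          hQRrev j hjk h2 0, hQRrev j hjk h2 1]
    exact hSQ.mul_left hSQ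
  obtain ⟨lam, hlam⟩ := schur_scalar C hCsa (by
    intro K hcl hinv
    exact hirr K hcl (fun j h1 h2 h3 x hx => hinv x hx (Q j) (hCQ j h1 h2 h3))
      (fun i x hx => hinv x hx (R i) (hCR i)))
  -- a unit vector in the range of R 0
  have hx0 : ∃ x, R 0 x ≠ 0 := by
    by_contra hc
    push_neg at hc
    exact hR00 (ContinuousLinearMap.ext fun x => by simp [hc x])
  obtain ⟨x0, hx0⟩ := hx0
  set e0 : H := ((‖R 0 x0‖ : ℂ))⁻¹ • R 0 x0 with he0def
  have hnx0 : (‖R 0 x0‖ : ℝ) ≠ 0 := norm_ne_zero_iff.mpr hx0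
  have he0norm : ‖e0‖ = 1 := by
    rw [he0def, norm_smul]
    simp [hnx0]
  have he0ne : e0 ≠ 0 := by
    intro h
    rw [h, norm_zero] at he0norm
    exact zero_ne_one he0norm
  have he0 : R 0 e0 = e0 := by
    rw [he0def, map_smul]
    congr 1
    have := congrArg (fun A : H →L[ℂ] H => A x0) (hRi 0)
    simpa [happ] using this
  clear_value e0
  set v : H := R 1 e0 with hvdef
  have hR1v : R 1 v = v := by
    have := congrArg (fun A : H →L[ℂ] H => A e0) (hRi 1)
    simpa [happ, ← hvdef] using this
  clear_value v
  have he0e0 : (inner ℂ e0 e0 : ℂ) = 1 := by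
    rw [inner_self_eq_norm_sq_to_K, he0norm]
    norm_num
  have hsym : ∀ (A : H →L[ℂ] H), IsSelfAdjoint A → ∀ x y : H,
      (inner ℂ (A x) y : ℂ) = inner ℂ x (A y) := by
    intro A hA x y
    conv_lhs => rw [← hA.adjoint_eq]
    exact ContinuousLinearMap.adjoint_inner_left A y x
  have hR0v : R 0 v = e0 - lam • e0 := by
    have hop : R 0 * C * R 0 = lam • R 0 := by
      rw [hlam, mul_smul_comm, mul_one, smul_mul_assoc, hRi 0]
    have hexp : R 0 * C * R 0 = R 0 - R 0 * (R 1 * R 0) := proj_sandwich (hRi 0) (hRi 1)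
    have h := congrArg (fun A : H →L[ℂ] H => A e0) (hexp.symm.trans hop)
    simp only [happ, ContinuousLinearMap.sub_apply, ContinuousLinearMap.smul_apply] at h
    rw [he0] at h
    rw [← hvdef] at h
    rw [← h]
    abel
  have hinner : (inner ℂ e0 v : ℂ) = 1 - lam := by
    calc (inner ℂ e0 v : ℂ) = inner ℂ (R 0 e0) v := by rw [he0]
      _ = inner ℂ e0 (R 0 v) := hsym (R 0) (hRsa 0) e0 v
      _ = inner ℂ e0 (e0 - lam • e0) := by rw [hR0v]
      _ = 1 - lam := by
          rw [inner_sub_right, inner_smul_right, he0e0]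
          ring
  have hvv : (inner ℂ v v : ℂ) = 1 - lam := by
    calc (inner ℂ v v : ℂ) = inner ℂ (R 1 e0) v := by rw [← hvdef]
      _ = inner ℂ e0 (R 1 v) := hsym (R 1) (hRsa 1) e0 v
      _ = inner ℂ e0 v := by rw [hR1v]
      _ = 1 - lam := hinner
  set t : ℝ := ‖v‖^2 with htdef
  have htc : ((t : ℝ) : ℂ) = 1 - lam := by
    rw [← hvv, inner_self_eq_norm_sq_to_K, htdef]
    norm_cast
  have hlamt : lam = 1 - (t:ℂ) := by rw [htc]; ring
  have hinner' : (inner ℂ e0 v : ℂ) = (t : ℂ) := hinner.trans htc.symm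
  have hvte : (inner ℂ v e0 : ℂ) = (t : ℂ) := by
    simpa using congrArg (starRingEnd ℂ) hinner'
  have hvvt : (inner ℂ v v : ℂ) = (t : ℂ) := hvv.trans htc.symm
  have ht0 : 0 ≤ t := by positivity
  have ht1 : t ≤ 1 := by
    have hSe : ((‖S e0‖^2 : ℝ) : ℂ) = lam := by
      calc ((‖S e0‖^2 : ℝ) : ℂ) = inner ℂ (S e0) (S e0) := by
            rw [inner_self_eq_norm_sq_to_K]; norm_cast
        _ = inner ℂ e0 (S (S e0)) := hsym S hSsa e0 (S e0)
        _ = inner ℂ e0 (C e0) := rfl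
        _ = inner ℂ e0 (lam • e0) := by
            rw [hlam]
            simp
        _ = lam := by rw [inner_smul_right, he0e0, mul_one]
    rw [hlamt] at hSe
    have hre : (‖S e0‖^2 : ℝ) = 1 - t := by
      have := hSe
      push_cast at this
      exact_mod_cast this
    nlinarith [sq_nonneg ‖S e0‖]
  rcases eq_or_lt_of_le ht0 with ht0' | ht0'
  · -- t = 0 : R 1 e0 = 0, one-dimensional
    have hv0 : v = 0 := by
      have hnv : ‖v‖ = 0 := by
        have : ‖v‖^2 = 0 := by rw [← htdef, ← ht0']
        nlinarith [norm_nonneg v]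
      exact norm_eq_zero.mp hnv
    obtain ⟨hfd, hr1⟩ := hrank1 e0 he0ne (by
      intro i
      fin_cases i
      · show R 0 e0 ∈ _
        rw [he0]
        exact Submodule.mem_span_singleton_self e0
      · show R 1 e0 ∈ _
        rw [← hvdef, hv0]
        exact Submodule.zero_mem _)
    exact ⟨⟨hfd, by omega⟩, fun h => by omega⟩
  rcases eq_or_lt_of_le ht1 with ht1' | ht1'
  · -- t = 1 : R 1 e0 = e0, one-dimensional
    have hve : v = e0 := by
      have hz : (inner ℂ (v - e0) (v - e0) : ℂ) = 0 := by
        rw [inner_sub_left, inner_sub_right, inner_sub_right, hvvt, hvte, hinner', he0e0, ht1']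
        norm_num
      have := inner_self_eq_zero.mp hz
      rwa [sub_eq_zero] at this
    obtain ⟨hfd, hr1⟩ := hrank1 e0 he0ne (by
      intro i
      fin_cases i
      · show R 0 e0 ∈ _
        rw [he0]
        exact Submodule.mem_span_singleton_self e0
      · show R 1 e0 ∈ _
        rw [← hvdef, hve]
        exact Submodule.mem_span_singleton_self e0)
    exact ⟨⟨hfd, by omega⟩, fun h => by omega⟩
  -- main case : 0 < t < 1
  set sq : ℝ := Real.sqrt (t * (1 - t)) with hsqdef
  have hsq0 : 0 < sq := Real.sqrt_pos.mpr (by nlinarith)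
  have hsq2 : sq ^ 2 = t * (1 - t) := Real.sq_sqrt (by nlinarith)
  have hsqne : ((sq : ℝ) : ℂ) ≠ 0 := by exact_mod_cast ne_of_gt hsq0
  have hcast : ((sq : ℝ) : ℂ) ^ 2 = (t : ℂ) * (1 - (t : ℂ)) := by
    have := congrArg (Complex.ofReal) hsq2
    push_cast at this
    exact this
  set w : H := v - (t : ℂ) • e0 with hwdef
  have hew : (inner ℂ e0 w : ℂ) = 0 := by
    rw [hwdef, inner_sub_right, inner_smul_right, hinner', he0e0]
    ring
  have hww : (inner ℂ w w : ℂ) = ((t * (1 - t) : ℝ) : ℂ) := by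
    simp only [hwdef, inner_sub_left, inner_sub_right, inner_smul_left, inner_smul_right,
      hvvt, hvte, hinner', he0e0, Complex.conj_ofReal]
    push_cast
    ring
  have hwnorm2 : ‖w‖ ^ 2 = t * (1 - t) := by
    have h1 : ‖w‖ ^ 2 = RCLike.re (inner ℂ w w : ℂ) := InnerProductSpace.norm_sq_eq_re_inner (𝕜 := ℂ) w
    rw [hww] at h1
    simpa using h1
  set b1 : H := ((sq : ℂ))⁻¹ • w with hb1def
  have hsb1 : ((sq : ℝ) : ℂ) • b1 = w := by
    rw [hb1def, smul_smul, mul_inv_cancel₀ hsqne, one_smul]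
  have hwn : ‖w‖ = sq := by
    have h1 : ‖w‖ ^ 2 = sq ^ 2 := by rw [hwnorm2, hsq2]
    nlinarith [norm_nonneg w, hsq0]
  have hb1norm : ‖b1‖ = 1 := by
    rw [hb1def, norm_smul, hwn, norm_inv]
    have : ‖((sq : ℝ) : ℂ)‖ = sq := by
      simp [abs_of_pos hsq0]
    rw [this]
    field_simp
  have he0b1 : (inner ℂ e0 b1 : ℂ) = 0 := by rw [hb1def, inner_smul_right, hew, mul_zero]
  have hb1e0 : (inner ℂ b1 e0 : ℂ) = 0 := by simpa using congrArg (starRingEnd ℂ) he0b1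
  have hvdec : v = (t : ℂ) • e0 + ((sq : ℝ) : ℂ) • b1 := by
    rw [hsb1, hwdef]
    abel
  have hR0w : R 0 w = 0 := by
    rw [hwdef, map_sub, map_smul, hR0v, he0, hlamt, sub_smul, one_smul]
    abel
  have hR0b1 : R 0 b1 = 0 := by rw [hb1def, map_smul, hR0w, smul_zero]
  have hR1w : R 1 w = (1 - (t : ℂ)) • v := by
    rw [hwdef, map_sub, map_smul, ← hvdef, hR1v, sub_smul, one_smul]
  have hR1b1 : R 1 b1 = ((sq : ℂ))⁻¹ • ((1 - (t : ℂ)) • v) := by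
    rw [hb1def, map_smul, hR1w]
  clear_value b1
  set b : Fin 2 → H := ![e0, b1] with hbdef
  set K : Submodule ℂ H := Submodule.span ℂ (Set.range b) with hKdef
  have he0K : e0 ∈ K := Submodule.subset_span ⟨0, rfl⟩
  have hb1K : b1 ∈ K := Submodule.subset_span ⟨1, rfl⟩
  have hvK : v ∈ K := by
    rw [hvdec]
    exact K.add_mem (K.smul_mem _ he0K) (K.smul_mem _ hb1K)
  haveI : FiniteDimensional ℂ K := FiniteDimensional.span_of_finite ℂ (Set.finite_range b)
  have hKcl : IsClosed (K : Set H) := Submodule.closed_of_finiteDimensional K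
  have hKQ : ∀ j, 1 ≤ j → j ≤ m → j ≠ k → ∀ y ∈ K, Q j y ∈ K := by
    intro j h1 h2 h3 y hy
    rcases hQ01 j h1 h2 h3 with hq | hq
    · rw [hq]; simpa using K.zero_mem
    · rw [hq]; simpa using hy
  have hRe0K : ∀ i, R i e0 ∈ K := by
    intro i
    fin_cases i
    · show R 0 e0 ∈ K
      rw [he0]; exact he0K
    · show R 1 e0 ∈ K
      rw [← hvdef]; exact hvK
  have hRb1K : ∀ i, R i b1 ∈ K := by
    intro i
    fin_cases i
    · show R 0 b1 ∈ K
      rw [hR0b1]; exact K.zero_mem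
    · show R 1 b1 ∈ K
      rw [hR1b1]; exact K.smul_mem _ (K.smul_mem _ hvK)
  have hKR : ∀ i, ∀ y ∈ K, R i y ∈ K := by
    intro i y hy
    induction hy using Submodule.span_induction with
    | mem x hx =>
        obtain ⟨n, rfl⟩ := hx
        fin_cases n
        · exact hRe0K i
        · exact hRb1K i
    | zero => simpa using K.zero_mem
    | add x y hx hy ihx ihy => rw [map_add]; exact K.add_mem ihx ihy
    | smul c x hx ih => rw [map_smul]; exact K.smul_mem c ih
  rcases hirr K hKcl hKQ hKR with h | h
  · exfalso
    apply he0ne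
    have := he0K
    rw [h] at this
    simpa using this
  have hfd : FiniteDimensional ℂ H := ⟨h ▸ Submodule.fg_span (Set.finite_range b)⟩
  have hle2 : Module.finrank ℂ H ≤ 2 := by
    have h2 : Module.finrank ℂ K ≤ 2 := by simpa [Set.finrank] using finrank_range_le_card (R := ℂ) b
    rwa [h, finrank_top] at h2
  refine ⟨⟨hfd, hle2⟩, fun hdim => ?_⟩
  have hQlow : ∀ j, 1 ≤ j → j < k → Q j = 0 := by
    intro j h1 h2
    rcases hQ01 j h1 (le_trans (le_of_lt h2) hkm) (ne_of_lt h2) with hq | hq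
    · exact hq
    · exfalso
      have hR1one : R 1 = 1 := by
        have h3 := hQR' j h1 h2 1
        rwa [hq, one_mul] at h3
      have hve : v = e0 := by rw [hvdef, hR1one]; rfl
      have htt : (t : ℂ) = 1 := by rw [← hvvt, hve, he0e0]
      have : t = 1 := by exact_mod_cast htt
      linarith
  have hQhigh : ∀ j, k < j → j ≤ m → Q j = 1 := by
    intro j h1 h2
    rcases hQ01 j (le_trans hk1 (le_of_lt h1)) h2 (ne_of_gt h1) with hq | hq
    · exfalso
      have hR1zero : R 1 = 0 := by
        have h3 := hRQ' j h1 h2 1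
        rw [hq, mul_zero] at h3
        exact h3.symm
      have hv0 : v = 0 := by rw [hvdef, hR1zero]; rfl
      have htt : (t : ℂ) = 0 := by rw [← hvvt, hv0]; simp
      have : t = 0 := by exact_mod_cast htt
      linarith
    · exact hq
  have hortho : Orthonormal ℂ b := by
    constructor
    · intro i
      fin_cases i
      · simpa [hbdef] using he0norm
      · simpa [hbdef] using hb1norm
    · intro i j hij
      fin_cases i <;> fin_cases j <;>
        first
          | exact absurd rfl hij
          | (simpa [hbdef] using he0b1)
          | (simpa [hbdef] using hb1e0)
  have hspan : Submodule.span ℂ (Set.range b) = ⊤ := by rw [← hKdef]; exact h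
  refine ⟨hQlow, hQhigh, t, ht0', ht1', OrthonormalBasis.mk hortho hspan.ge, ?_, ?_, ?_, ?_⟩
  · rw [OrthonormalBasis.coe_mk]
    simpa [hbdef] using he0
  · rw [OrthonormalBasis.coe_mk]
    simpa [hbdef] using hR0b1
  · rw [OrthonormalBasis.coe_mk]
    show R 1 e0 = (t : ℂ) • e0 + _ • b1
    rw [← hvdef, ← hsqdef]
    exact hvdec
  · rw [OrthonormalBasis.coe_mk]
    show R 1 b1 = _ • e0 + _ • b1
    rw [← hsqdef, hR1b1, hvdec]
    match_scalars
    · push_cast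
      field_simp
      linear_combination -hcast
    · push_cast
      field_simp
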